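/- arXiv:1909.10106 — 3 statements merged into one kernel-verified Lean document; each statement's English description precedes it below -/
import Mathlib

section
/- Given any initial time t₀, final time t_f with t₀ < t_f, initial position p₀, initial speed v₀, and final position p_f, there exist unique constants a, c such that the trajectory with u(t) = a·t + c, v(t) = (1/2)·a·t² + c·t + v₀ - ((1/2)·a·t₀² + c·t₀), p(t) determined by integrating v from p(t₀) = p₀, satisfies p(t_f) = p_f and u(t_f) = 0. -/
lemma integ_aux (A B C x y : ℝ) :
    ∫ t in x..y, ((1/2) * A * t^2 + B * t + C) =
      (1/2) * A * (y^3 - x^3)/3 + B * (y^2 - x^2)/2 + C * (y - x) := by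
  have hderiv : ∀ t ∈ Set.uIcc x y,
      HasDerivAt (fun t : ℝ => (1/2) * A * t^3/3 + B * t^2/2 + C * t)
        ((1/2) * A * t^2 + B * t + C) t := by
    intro t _
    have h1 : HasDerivAt (fun t : ℝ => (1/2) * A * t^3/3 + B * t^2/2 + C * t)
        (((1/2) * A * ((3:ℕ) * t^2))/3 + (B * ((2:ℕ) * t^1))/2 + C * 1) t := by
      exact ((((hasDerivAt_pow 3 t).const_mul ((1/2)*A)).div_const 3).add
        (((hasDerivAt_pow 2 t).const_mul B).div_const 2)).add ((hasDerivAt_id t).const_mul C)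
    convert h1 using 1
    push_cast
    ring
  have hint : IntervalIntegrable (fun t : ℝ => (1/2) * A * t^2 + B * t + C)
      MeasureTheory.volume x y := by
    apply Continuous.intervalIntegrable
    continuity
  rw [intervalIntegral.integral_eq_sub_of_hasDerivAt hderiv hint]
  ring

theorem stmt_1 (t₀ t_f p₀ v₀ p_f : ℝ) (h : t₀ < t_f) :
    ∃! ac : ℝ × ℝ,
      (ac.1 * t_f + ac.2 = 0) ∧
      (p₀ + ∫ t in t₀..t_f,
          ((1/2) * ac.1 * t^2 + ac.2 * t +
            (v₀ - ((1/2) * ac.1 * t₀^2 + ac.2 * t₀))) = p_f) := by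
  have hd : t_f - t₀ ≠ 0 := sub_ne_zero.mpr h.ne'
  set a : ℝ := 3 * (p₀ + v₀ * (t_f - t₀) - p_f) / (t_f - t₀)^3 with ha
  refine ⟨(a, -a * t_f), ⟨by ring, ?_⟩, ?_⟩
  · rw [integ_aux]
    rw [ha]
    field_simp [ha]
    ring
  · rintro ⟨a', c'⟩ ⟨h1, h2⟩
    rw [integ_aux] at h2
    simp only at h1 h2 ⊢
    have hc : c' = -a' * t_f := by linarith
    subst hc
    have ha' : a' = a := by
      rw [ha]
      field_simp
      nlinarith [h2, sq_nonneg (t_f - t₀)]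
    subst ha'
    rfl
end

section
/- Among all twice continuously differentiable trajectories p : [t₀, t_f] → ℝ satisfying p(t₀) = p₀, p'(t₀) = v₀, p(t_f) = p_f, the functional J(p) = (1/2)∫_{t₀}^{t_f} (p''(t))² dt is minimized by the unique cubic polynomial trajectory whose second derivative is affine in t and vanishes at t_f. -/
/-- Admissibility: `q` is C² on `[t₀, t_f]` and meets the boundary conditions
`q(t₀) = p₀`, `q'(t₀) = v₀`, `q(t_f) = p_f`. -/
def Admissible (t₀ t_f p₀ v₀ p_f : ℝ) (q : ℝ → ℝ) : Prop :=
  ContDiffOn ℝ 2 q (Set.Icc t₀ t_f) ∧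
  q t₀ = p₀ ∧ derivWithin q (Set.Icc t₀ t_f) t₀ = v₀ ∧ q t_f = p_f

/-- The cost functional: half the integral of the squared acceleration. -/
noncomputable def Cost (t₀ t_f : ℝ) (q : ℝ → ℝ) : ℝ :=
  (1/2) * ∫ t in t₀..t_f,
    (derivWithin (derivWithin q (Set.Icc t₀ t_f)) (Set.Icc t₀ t_f) t)^2

/-- `p` is the optimal cubic trajectory: admissible, second derivative affine
    in `t` and vanishing at `t_f`, and minimizing the cost among admissible
    trajectories. -/
def IsOptimalCubic (t₀ t_f p₀ v₀ p_f : ℝ) (p : ℝ → ℝ) : Prop :=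
  Admissible t₀ t_f p₀ v₀ p_f p ∧
  (∃ a c : ℝ,
    (∀ t ∈ Set.Icc t₀ t_f,
      derivWithin (derivWithin p (Set.Icc t₀ t_f)) (Set.Icc t₀ t_f) t = a * t + c) ∧
    a * t_f + c = 0) ∧
  (∀ q : ℝ → ℝ, Admissible t₀ t_f p₀ v₀ p_f q →
    Cost t₀ t_f p ≤ Cost t₀ t_f q)

open Set

section helpers
variable {t₀ t_f : ℝ}

private lemma reg1 (h : t₀ < t_f) {q : ℝ → ℝ} (hq : ContDiffOn ℝ 2 q (Icc t₀ t_f)) :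
    ContDiffOn ℝ 1 (derivWithin q (Icc t₀ t_f)) (Icc t₀ t_f) :=
  hq.derivWithin (uniqueDiffOn_Icc h) (by norm_num)

private lemma reg2 (h : t₀ < t_f) {q : ℝ → ℝ} (hq : ContDiffOn ℝ 2 q (Icc t₀ t_f)) :
    ContinuousOn (derivWithin (derivWithin q (Icc t₀ t_f)) (Icc t₀ t_f)) (Icc t₀ t_f) :=
  ((reg1 h hq).derivWithin (uniqueDiffOn_Icc h)
    (by norm_num : (0:WithTop ℕ∞) + 1 ≤ 1)).continuousOn

private lemma regd1 (h : t₀ < t_f) {q : ℝ → ℝ} (hq : ContDiffOn ℝ 2 q (Icc t₀ t_f)) :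
    ∀ t ∈ Icc t₀ t_f, HasDerivWithinAt q (derivWithin q (Icc t₀ t_f) t) (Icc t₀ t_f) t :=
  fun t ht => ((hq.differentiableOn two_ne_zero) t ht).hasDerivWithinAt

private lemma regd2 (h : t₀ < t_f) {q : ℝ → ℝ} (hq : ContDiffOn ℝ 2 q (Icc t₀ t_f)) :
    ∀ t ∈ Icc t₀ t_f, HasDerivWithinAt (derivWithin q (Icc t₀ t_f))
      (derivWithin (derivWithin q (Icc t₀ t_f)) (Icc t₀ t_f) t) (Icc t₀ t_f) t :=
  fun t ht => (((reg1 h hq).differentiableOn one_ne_zero) t ht).hasDerivWithinAt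

private lemma cross (h : t₀ < t_f) (a : ℝ) {w : ℝ → ℝ} (hw : ContDiffOn ℝ 2 w (Icc t₀ t_f))
    (h0 : w t₀ = 0) (h1 : derivWithin w (Icc t₀ t_f) t₀ = 0) (h2 : w t_f = 0) :
    ∫ t in t₀..t_f, (a * (t - t_f)) *
      derivWithin (derivWithin w (Icc t₀ t_f)) (Icc t₀ t_f) t = 0 := by
  set S := Icc t₀ t_f with hS
  set w1 := derivWithin w S with hw1
  set w2 := derivWithin w1 S with hw2
  set F : ℝ → ℝ := fun t => a * (t - t_f) * w1 t - a * w t with hFdef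
  have contw : ContinuousOn w S := hw.continuousOn
  have contw1 : ContinuousOn w1 S := (reg1 h hw).continuousOn
  have contw2 : ContinuousOn w2 S := reg2 h hw
  have contF : ContinuousOn F S :=
    ((continuousOn_const.mul (continuousOn_id.sub continuousOn_const)).mul contw1).sub
      (continuousOn_const.mul contw)
  have hint : IntervalIntegrable (fun t => a * (t - t_f) * w2 t)
      MeasureTheory.volume t₀ t_f := by
    apply ContinuousOn.intervalIntegrable
    rw [uIcc_of_le h.le]
    exact (continuousOn_const.mul (continuousOn_id.sub continuousOn_const)).mul contw2
  have hderiv : ∀ x ∈ Ioo t₀ t_f, HasDerivWithinAt F (a * (x - t_f) * w2 x) (Ioi x) x := by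
    intro x hx
    have hxS : x ∈ S := Ioo_subset_Icc_self hx
    have hnhds : S ∈ nhds x := Icc_mem_nhds hx.1 hx.2
    have hdw : HasDerivAt w (w1 x) x := (regd1 h hw x hxS).hasDerivAt hnhds
    have hdw1 : HasDerivAt w1 (w2 x) x := (regd2 h hw x hxS).hasDerivAt hnhds
    have hl : HasDerivAt (fun t => a * (t - t_f)) a x := by
      simpa using ((hasDerivAt_id x).sub_const t_f).const_mul a
    have hF : HasDerivAt F (a * (x - t_f) * w2 x) x := by
      have := (hl.fun_mul hdw1).fun_sub (hdw.const_mul a)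
      exact this.congr_deriv (by ring)
    exact hF.hasDerivWithinAt
  have key := intervalIntegral.integral_eq_sub_of_hasDeriv_right_of_le h.le contF hderiv hint
  rw [key, hFdef]
  simp [h0, h1, h2]

private lemma costle (h : t₀ < t_f) {p q : ℝ → ℝ} (a : ℝ)
    (hp : ContDiffOn ℝ 2 p (Icc t₀ t_f)) (hq : ContDiffOn ℝ 2 q (Icc t₀ t_f))
    (hp2 : ∀ t ∈ Icc t₀ t_f,
      derivWithin (derivWithin p (Icc t₀ t_f)) (Icc t₀ t_f) t = a * (t - t_f))
    (e0 : q t₀ = p t₀)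
    (e1 : derivWithin q (Icc t₀ t_f) t₀ = derivWithin p (Icc t₀ t_f) t₀)
    (e2 : q t_f = p t_f) :
    (1/2 : ℝ) * ∫ t in t₀..t_f,
        (derivWithin (derivWithin p (Icc t₀ t_f)) (Icc t₀ t_f) t)^2 ≤
      (1/2 : ℝ) * ∫ t in t₀..t_f,
        (derivWithin (derivWithin q (Icc t₀ t_f)) (Icc t₀ t_f) t)^2 := by
  set S := Icc t₀ t_f with hS
  have uD : UniqueDiffOn ℝ S := uniqueDiffOn_Icc h
  have ht₀ : t₀ ∈ S := ⟨le_rfl, h.le⟩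
  have htf : t_f ∈ S := ⟨h.le, le_rfl⟩
  set w : ℝ → ℝ := fun t => q t - p t with hwdef
  have hw : ContDiffOn ℝ 2 w S := hq.sub hp
  have hw1 : ∀ t ∈ S, derivWithin w S t = derivWithin q S t - derivWithin p S t := by
    intro t ht
    exact derivWithin_fun_sub ((hq.differentiableOn two_ne_zero) t ht)
      ((hp.differentiableOn two_ne_zero) t ht)
  have hw2 : ∀ t ∈ S, derivWithin (derivWithin w S) S t =
      derivWithin (derivWithin q S) S t - derivWithin (derivWithin p S) S t := by
    intro t ht
    have := derivWithin_congr hw1 (hw1 t ht)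
    rw [this]
    exact derivWithin_fun_sub
      (((reg1 h hq).differentiableOn one_ne_zero) t ht)
      (((reg1 h hp).differentiableOn one_ne_zero) t ht)
  set q2 := derivWithin (derivWithin q S) S
  set w2 := derivWithin (derivWithin w S) S
  have hdec : ∀ t ∈ S, (q2 t)^2 =
      (a * (t - t_f))^2 + (2 * (a * (t - t_f)) * w2 t + (w2 t)^2) := by
    intro t ht
    have : q2 t = a * (t - t_f) + w2 t := by
      rw [hw2 t ht, hp2 t ht]; ring
    rw [this]; ring
  have contw2 : ContinuousOn w2 S := reg2 h hw
  have contlin : ContinuousOn (fun t : ℝ => a * (t - t_f)) S :=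
    continuousOn_const.mul (continuousOn_id.sub continuousOn_const)
  have int1 : IntervalIntegrable (fun t => (a * (t - t_f))^2)
      MeasureTheory.volume t₀ t_f := by
    apply ContinuousOn.intervalIntegrable; rw [uIcc_of_le h.le]; exact contlin.pow 2
  have int2 : IntervalIntegrable (fun t => 2 * (a * (t - t_f)) * w2 t + (w2 t)^2)
      MeasureTheory.volume t₀ t_f := by
    apply ContinuousOn.intervalIntegrable; rw [uIcc_of_le h.le]
    exact ((continuousOn_const.mul contlin).mul contw2).add (contw2.pow 2)
  have split : ∫ t in t₀..t_f, (q2 t)^2 =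
      (∫ t in t₀..t_f, (a * (t - t_f))^2) +
      ∫ t in t₀..t_f, (2 * (a * (t - t_f)) * w2 t + (w2 t)^2) := by
    rw [← intervalIntegral.integral_add int1 int2]
    apply intervalIntegral.integral_congr
    rw [uIcc_of_le h.le]
    intro t ht
    exact hdec t ht
  have hcross : ∫ t in t₀..t_f, 2 * (a * (t - t_f)) * w2 t = 0 := by
    have := cross h a hw (by simp [hwdef, e0]) (by rw [hw1 t₀ ht₀, e1]; ring)
      (by simp [hwdef, e2])
    have h2 : ∫ t in t₀..t_f, 2 * (a * (t - t_f)) * w2 t =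
        2 * ∫ t in t₀..t_f, (a * (t - t_f)) * w2 t := by
      rw [← intervalIntegral.integral_const_mul]
      apply intervalIntegral.integral_congr; intro t _; ring
    rw [h2, this, mul_zero]
  have intc : IntervalIntegrable (fun t => 2 * (a * (t - t_f)) * w2 t)
      MeasureTheory.volume t₀ t_f := by
    apply ContinuousOn.intervalIntegrable; rw [uIcc_of_le h.le]
    exact (continuousOn_const.mul contlin).mul contw2
  have intsq : IntervalIntegrable (fun t => (w2 t)^2) MeasureTheory.volume t₀ t_f := by
    apply ContinuousOn.intervalIntegrable; rw [uIcc_of_le h.le]; exact contw2.pow 2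
  have split2 : ∫ t in t₀..t_f, (2 * (a * (t - t_f)) * w2 t + (w2 t)^2) =
      (∫ t in t₀..t_f, 2 * (a * (t - t_f)) * w2 t) + ∫ t in t₀..t_f, (w2 t)^2 :=
    intervalIntegral.integral_add intc intsq
  have hnn : 0 ≤ ∫ t in t₀..t_f, (w2 t)^2 :=
    intervalIntegral.integral_nonneg h.le fun t _ => sq_nonneg _
  have hpint : ∫ t in t₀..t_f,
      (derivWithin (derivWithin p S) S t)^2 = ∫ t in t₀..t_f, (a * (t - t_f))^2 := by
    apply intervalIntegral.integral_congr
    rw [uIcc_of_le h.le]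
    intro t ht
    simp only [hp2 t ht]
  rw [hpint]
  have : ∫ t in t₀..t_f, (q2 t)^2 = (∫ t in t₀..t_f, (a * (t - t_f))^2) +
      ∫ t in t₀..t_f, (w2 t)^2 := by rw [split, split2, hcross, zero_add]
  rw [this]
  nlinarith [hnn]

private lemma hasDerivP1 (t₀ t_f v₀ a x : ℝ) :
    HasDerivAt (fun t : ℝ => v₀ + a * ((t - t_f)^2/2 - (t₀ - t_f)^2/2))
      (a * (x - t_f)) x := by
  have h2 : HasDerivAt (fun t : ℝ => (t - t_f)^2) (2*(x - t_f)) x := by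
    simpa using ((hasDerivAt_id x).sub_const t_f).fun_pow 2
  have H := (hasDerivAt_const x v₀).fun_add
    (((h2.div_const 2).sub_const ((t₀ - t_f)^2/2)).const_mul a)
  exact H.congr_deriv (by ring)

private lemma hasDerivP0 (t₀ t_f p₀ v₀ a x : ℝ) :
    HasDerivAt (fun t : ℝ => p₀ + v₀ * (t - t₀) +
        a * ((t - t_f)^3/6 + (t_f - t₀)^3/6 - (t_f - t₀)^2 * (t - t₀)/2))
      (v₀ + a * ((x - t_f)^2/2 - (t₀ - t_f)^2/2)) x := by
  have h3 : HasDerivAt (fun t : ℝ => (t - t_f)^3) (3*(x - t_f)^2) x := by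
    simpa using ((hasDerivAt_id x).sub_const t_f).fun_pow 3
  have hlin : HasDerivAt (fun t : ℝ => v₀ * (t - t₀)) (v₀ * 1) x :=
    ((hasDerivAt_id x).sub_const t₀).const_mul v₀
  have hlin2 : HasDerivAt (fun t : ℝ => (t_f - t₀)^2 * (t - t₀)/2)
      (((t_f - t₀)^2 * 1)/2) x :=
    (((hasDerivAt_id x).sub_const t₀).const_mul ((t_f - t₀)^2)).div_const 2
  have H := ((hasDerivAt_const x p₀).fun_add hlin).fun_add
      ((((h3.div_const 6).add_const ((t_f - t₀)^3/6)).fun_sub hlin2).const_mul a)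
  exact H.congr_deriv (by ring)

private lemma mem_nhds_Ici (h : t₀ < t_f) {x : ℝ} (hx : x ∈ Ico t₀ t_f) :
    Icc t₀ t_f ∈ nhdsWithin x (Ici x) := by
  apply mem_nhdsWithin.2
  exact ⟨Iio t_f, isOpen_Iio, hx.2, fun y hy => ⟨le_trans hx.1 hy.2, le_of_lt hy.1⟩⟩

private lemma reconstruct (h : t₀ < t_f) {q : ℝ → ℝ} {p₀ v₀ a : ℝ}
    (hq : ContDiffOn ℝ 2 q (Icc t₀ t_f))
    (hq0 : q t₀ = p₀) (hq1 : derivWithin q (Icc t₀ t_f) t₀ = v₀)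
    (hq2 : ∀ t ∈ Icc t₀ t_f,
      derivWithin (derivWithin q (Icc t₀ t_f)) (Icc t₀ t_f) t = a * (t - t_f)) :
    ∀ t ∈ Icc t₀ t_f, q t = p₀ + v₀ * (t - t₀) +
      a * ((t - t_f)^3/6 + (t_f - t₀)^3/6 - (t_f - t₀)^2 * (t - t₀)/2) := by
  set S := Icc t₀ t_f with hS
  have ht₀ : t₀ ∈ S := ⟨le_rfl, h.le⟩
  set q1 := derivWithin q S with hq1def
  set P1 : ℝ → ℝ := fun t => v₀ + a * ((t - t_f)^2/2 - (t₀ - t_f)^2/2) with hP1def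
  have hP1d : ∀ x : ℝ, HasDerivAt P1 (a * (x - t_f)) x := fun x => hasDerivP1 t₀ t_f v₀ a x
  have step1 : ∀ t ∈ S, q1 t = P1 t := by
    have contE : ContinuousOn (fun t => q1 t - P1 t) S :=
      (reg1 h hq).continuousOn.sub (Continuous.continuousOn (by fun_prop))
    have hder : ∀ x ∈ Ico t₀ t_f, HasDerivWithinAt (fun t => q1 t - P1 t) 0 (Ici x) x := by
      intro x hx
      have hxS : x ∈ S := Ico_subset_Icc_self hx
      have h1 : HasDerivWithinAt q1 (a * (x - t_f)) (Ici x) x := by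
        have := (regd2 h hq x hxS).mono_of_mem_nhdsWithin (mem_nhds_Ici h hx)
        rwa [← hS, hq2 x hxS] at this
      have := h1.fun_sub ((hP1d x).hasDerivWithinAt)
      simpa using this
    intro t ht
    have := constant_of_has_deriv_right_zero contE hder t ht
    have hE0 : q1 t₀ - P1 t₀ = 0 := by
      rw [hq1, hP1def]; simp
    rw [hE0] at this
    linarith [this]
  set P0 : ℝ → ℝ := fun t => p₀ + v₀ * (t - t₀) +
      a * ((t - t_f)^3/6 + (t_f - t₀)^3/6 - (t_f - t₀)^2 * (t - t₀)/2) with hP0def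
  have hP0d : ∀ x : ℝ, HasDerivAt P0 (P1 x) x := fun x => hasDerivP0 t₀ t_f p₀ v₀ a x
  have contD : ContinuousOn (fun t => q t - P0 t) S :=
    hq.continuousOn.sub (Continuous.continuousOn (by fun_prop))
  have hder : ∀ x ∈ Ico t₀ t_f, HasDerivWithinAt (fun t => q t - P0 t) 0 (Ici x) x := by
    intro x hx
    have hxS : x ∈ S := Ico_subset_Icc_self hx
    have h1 : HasDerivWithinAt q (P1 x) (Ici x) x := by
      have := (regd1 h hq x hxS).mono_of_mem_nhdsWithin (mem_nhds_Ici h hx)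
      rwa [← hS, show derivWithin q S x = P1 x from step1 x hxS] at this
    have := h1.fun_sub ((hP0d x).hasDerivWithinAt)
    simpa using this
  intro t ht
  have := constant_of_has_deriv_right_zero contD hder t ht
  have hD0 : q t₀ - P0 t₀ = 0 := by
    rw [hq0, hP0def]; ring_nf
  rw [hD0] at this
  have : q t = P0 t := by linarith [this]
  rw [this, hP0def]

end helpers

theorem stmt_2 (t₀ t_f p₀ v₀ p_f : ℝ) (h : t₀ < t_f) :
    ∃ p : ℝ → ℝ, IsOptimalCubic t₀ t_f p₀ v₀ p_f p ∧
      ∀ p' : ℝ → ℝ, IsOptimalCubic t₀ t_f p₀ v₀ p_f p' →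
        Set.EqOn p' p (Set.Icc t₀ t_f) := by
  set S := Icc t₀ t_f with hS
  have uD : UniqueDiffOn ℝ S := uniqueDiffOn_Icc h
  have ht₀ : t₀ ∈ S := ⟨le_rfl, h.le⟩
  have htf : t_f ∈ S := ⟨h.le, le_rfl⟩
  have hT : t_f - t₀ ≠ 0 := sub_ne_zero.2 h.ne'
  set a : ℝ := 3 * (p₀ + v₀ * (t_f - t₀) - p_f) / (t_f - t₀)^3 with ha
  set P : ℝ → ℝ := fun t => p₀ + v₀ * (t - t₀) +
      a * ((t - t_f)^3/6 + (t_f - t₀)^3/6 - (t_f - t₀)^2 * (t - t₀)/2) with hPdef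
  have hPsmooth : ContDiffOn ℝ 2 P S := by
    apply ContDiff.contDiffOn
    have hid : ContDiff ℝ 2 (fun t : ℝ => t) := contDiff_id
    exact (contDiff_const.add (contDiff_const.mul (hid.sub contDiff_const))).add
      (contDiff_const.mul ((((hid.sub contDiff_const).pow 3).div_const 6).add
        contDiff_const |>.sub
        ((contDiff_const.mul (hid.sub contDiff_const)).div_const 2)))
  have hP1 : ∀ t ∈ S, derivWithin P S t =
      v₀ + a * ((t - t_f)^2/2 - (t₀ - t_f)^2/2) := by
    intro t ht
    exact ((hasDerivP0 t₀ t_f p₀ v₀ a t).hasDerivWithinAt).derivWithin (uD t ht)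
  have hP2 : ∀ t ∈ S, derivWithin (derivWithin P S) S t = a * (t - t_f) := by
    intro t ht
    rw [derivWithin_congr hP1 (hP1 t ht)]
    exact ((hasDerivP1 t₀ t_f v₀ a t).hasDerivWithinAt).derivWithin (uD t ht)
  have hP0 : P t₀ = p₀ := by rw [hPdef]; ring
  have hPv : derivWithin P S t₀ = v₀ := by rw [hP1 t₀ ht₀]; ring
  have hPf : P t_f = p_f := by
    rw [hPdef]; simp only [ha]; field_simp; ring
  have hAdm : Admissible t₀ t_f p₀ v₀ p_f P := ⟨hPsmooth, hP0, hPv, hPf⟩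
  refine ⟨P, ⟨hAdm, ⟨a, -(a * t_f), fun t ht => by rw [hP2 t ht]; ring, by ring⟩, ?_⟩, ?_⟩
  · -- minimality
    intro q hq
    unfold Cost
    exact costle h a hPsmooth hq.1 hP2 (by rw [hq.2.1, hP0]) (by rw [hq.2.2.1, hPv])
      (by rw [hq.2.2.2, hPf])
  · -- uniqueness
    rintro p' ⟨⟨hcd, h0, h1, hf⟩, ⟨a', c', haff, hzero⟩, -⟩
    have hc' : c' = -(a' * t_f) := by linarith
    have haff' : ∀ t ∈ S, derivWithin (derivWithin p' S) S t = a' * (t - t_f) := by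
      intro t ht
      rw [← hS] at haff
      rw [haff t ht, hc']; ring
    have hrec := reconstruct h hcd h0 h1 haff'
    have hfa : p_f = p₀ + v₀ * (t_f - t₀) +
        a' * ((t_f - t_f)^3/6 + (t_f - t₀)^3/6 - (t_f - t₀)^2 * (t_f - t₀)/2) := by
      rw [← hf]; exact hrec t_f htf
    have haa : a' = a := by
      have hcube : (t_f - t₀)^3 ≠ 0 := pow_ne_zero 3 hT
      have h1' : a' * (t_f - t₀)^3 = a * (t_f - t₀)^3 := by
        have haT : a * (t_f - t₀)^3 = 3 * (p₀ + v₀ * (t_f - t₀) - p_f) := by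
          rw [ha]; field_simp
        nlinarith [hfa, haT]
      exact mul_right_cancel₀ hcube h1'
    intro t ht
    rw [hrec t ht, haa, hPdef]
end

section
/- If p, q : [t₀, t_f] → ℝ are C² with equal values of p(t₀), p'(t₀), p(t_f) and p'' is affine with p''(t_f) = 0, then (1/2)∫(q'')² ≥ (1/2)∫(p'')², with equality iff q'' = p'' on [t₀, t_f]. -/
theorem stmt_4 (t₀ t_f a c : ℝ) (p q : ℝ → ℝ) (h : t₀ < t_f)
    (hp : ContDiff ℝ 2 p) (hq : ContDiff ℝ 2 q)
    (h0 : p t₀ = q t₀) (h0' : deriv p t₀ = deriv q t₀)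
    (hf : p t_f = q t_f)
    (haff : ∀ t : ℝ, deriv (deriv p) t = a * t + c)
    (hzero : a * t_f + c = 0) :
    (1/2) * ∫ t in t₀..t_f, (deriv (deriv p) t)^2
      ≤ (1/2) * ∫ t in t₀..t_f, (deriv (deriv q) t)^2 ∧
    ((1/2) * ∫ t in t₀..t_f, (deriv (deriv q) t)^2
        = (1/2) * ∫ t in t₀..t_f, (deriv (deriv p) t)^2 ↔
      Set.EqOn (deriv (deriv q)) (deriv (deriv p)) (Set.Icc t₀ t_f)) := by
  have hab : t₀ ≤ t_f := h.le
  have h2 : (2 : WithTop ℕ∞) = 1 + 1 := by norm_num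
  have hq1 : ContDiff ℝ 1 (deriv q) := (contDiff_succ_iff_deriv.mp (h2 ▸ hq)).2.2
  have hp1 : ContDiff ℝ 1 (deriv p) := (contDiff_succ_iff_deriv.mp (h2 ▸ hp)).2.2
  have hq2c : Continuous (deriv (deriv q)) := hq1.continuous_deriv le_rfl
  have hp2c : Continuous (deriv (deriv p)) := by
    have hpe : (deriv (deriv p)) = fun t => a * t + c := funext haff
    rw [hpe]; continuity
  set f : ℝ → ℝ := fun t => deriv (deriv q) t - deriv (deriv p) t with hfdef
  have hfc : Continuous f := hq2c.sub hp2c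
  -- derivative facts
  have hvderiv : ∀ x ∈ Set.uIcc t₀ t_f,
      HasDerivAt (fun t => deriv q t - deriv p t) (f x) x := fun x _ =>
    ((hq1.differentiable one_ne_zero x).hasDerivAt).sub ((hp1.differentiable one_ne_zero x).hasDerivAt)
  have huderiv : ∀ x ∈ Set.uIcc t₀ t_f, HasDerivAt (fun t => a * t + c) a x := by
    intro x _
    simpa using ((hasDerivAt_id x).const_mul a).add_const c
  -- ∫ (q' - p') = 0
  have hintv : (∫ t in t₀..t_f, (deriv q t - deriv p t)) = 0 := by
    have hder : ∀ x ∈ Set.uIcc t₀ t_f,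
        HasDerivAt (fun t => q t - p t) (deriv q x - deriv p x) x := fun x _ =>
      ((hq.differentiable (by norm_num) x).hasDerivAt).sub
        ((hp.differentiable (by norm_num) x).hasDerivAt)
    rw [intervalIntegral.integral_eq_sub_of_hasDerivAt hder
      (((hq1.continuous).sub (hp1.continuous)).intervalIntegrable _ _)]
    rw [hf, h0]; ring
  -- cross term is zero
  have hcross : (∫ t in t₀..t_f, (a * t + c) * f t) = 0 := by
    rw [intervalIntegral.integral_mul_deriv_eq_deriv_mul huderiv hvderiv
      (intervalIntegrable_const) (hfc.intervalIntegrable _ _)]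
    have : (∫ t in t₀..t_f, a * (deriv q t - deriv p t)) = 0 := by
      rw [intervalIntegral.integral_const_mul, hintv, mul_zero]
    rw [this, hzero, h0']
    ring
  -- key decomposition
  have hi1 : IntervalIntegrable (fun t => (deriv (deriv p) t)^2) MeasureTheory.volume t₀ t_f :=
    (hp2c.pow 2).intervalIntegrable _ _
  have hi2 : IntervalIntegrable (fun t => 2 * ((a * t + c) * f t)) MeasureTheory.volume t₀ t_f :=
    (continuous_const.mul (((continuous_const.mul continuous_id).add continuous_const).mul
      hfc)).intervalIntegrable _ _
  have hi3 : IntervalIntegrable (fun t => (f t)^2) MeasureTheory.volume t₀ t_f :=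
    (hfc.pow 2).intervalIntegrable _ _
  have hkey : (∫ t in t₀..t_f, (deriv (deriv q) t)^2)
      = (∫ t in t₀..t_f, (deriv (deriv p) t)^2) + ∫ t in t₀..t_f, (f t)^2 := by
    have hpt : ∀ t : ℝ, (deriv (deriv q) t)^2
        = (deriv (deriv p) t)^2 + (2 * ((a * t + c) * f t) + (f t)^2) := by
      intro t
      have : f t = deriv (deriv q) t - deriv (deriv p) t := rfl
      rw [this, haff t]; ring
    calc (∫ t in t₀..t_f, (deriv (deriv q) t)^2)
        = ∫ t in t₀..t_f, ((deriv (deriv p) t)^2 + (2 * ((a * t + c) * f t) + (f t)^2)) := by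
          apply intervalIntegral.integral_congr
          intro x _; exact hpt x
      _ = (∫ t in t₀..t_f, (deriv (deriv p) t)^2)
            + ∫ t in t₀..t_f, (2 * ((a * t + c) * f t) + (f t)^2) :=
          intervalIntegral.integral_add hi1 (hi2.add hi3)
      _ = (∫ t in t₀..t_f, (deriv (deriv p) t)^2)
            + ((∫ t in t₀..t_f, 2 * ((a * t + c) * f t)) + ∫ t in t₀..t_f, (f t)^2) := by
          rw [intervalIntegral.integral_add hi2 hi3]
      _ = (∫ t in t₀..t_f, (deriv (deriv p) t)^2) + ∫ t in t₀..t_f, (f t)^2 := by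
          rw [intervalIntegral.integral_const_mul, hcross]; ring
  have hnn : 0 ≤ ∫ t in t₀..t_f, (f t)^2 :=
    intervalIntegral.integral_nonneg hab (fun u _ => sq_nonneg _)
  constructor
  · linarith
  constructor
  · intro heq
    have hz : (∫ t in t₀..t_f, (f t)^2) = 0 := by linarith
    intro x hx
    by_contra hne
    have hpos : 0 < ∫ t in t₀..t_f, (f t)^2 := by
      apply intervalIntegral.integral_pos h ((hfc.pow 2).continuousOn)
        (fun u _ => sq_nonneg _)
      refine ⟨x, hx, ?_⟩
      have : f x ≠ 0 := sub_ne_zero_of_ne hne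
      show 0 < f x ^ 2
      positivity
    linarith
  · intro heqon
    have : (∫ t in t₀..t_f, (deriv (deriv q) t)^2) = ∫ t in t₀..t_f, (deriv (deriv p) t)^2 := by
      apply intervalIntegral.integral_congr
      intro x hx
      rw [Set.uIcc_of_le hab] at hx
      show deriv (deriv q) x ^ 2 = deriv (deriv p) x ^ 2
      rw [heqon hx]
    rw [this]
end
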